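/- Let κ be a type of keys and let prod : List (κ × ℕ) → (κ × ℕ) → Prop be an inflation-preserving production relation, with immediate consequence operator T(I) = {h | ∃ l, every element of l belongs to I and prod l h}. Then for every finite set I ⊆ κ × ℕ, the max constraint satisfies γ_max(T(I)) = γ_max(T(γ_max(I))). -/

import Mathlib

/-- The immediate consequence operator of a production relation. -/
def ico {κ : Type*} (prod : List (κ × ℕ) → (κ × ℕ) → Prop) (I : Set (κ × ℕ)) :
    Set (κ × ℕ) :=
  {h | ∃ l : List (κ × ℕ), (∀ x ∈ l, x ∈ I) ∧ prod l h}

/-- `l'` inflates `l`: same length, componentwise same keys and costs of `l'` ≥ costs of `l`. -/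
def Inflates {κ : Type*} (l' l : List (κ × ℕ)) : Prop :=
  List.Forall₂ (fun a b => a.1 = b.1 ∧ a.2 ≥ b.2) l' l

/-- `prod` is inflation-preserving. -/
def InflationPreserving {κ : Type*} (prod : List (κ × ℕ) → (κ × ℕ) → Prop) : Prop :=
  ∀ l h l', prod l h → Inflates l' l →
    ∃ h' : κ × ℕ, h'.1 = h.1 ∧ h'.2 ≥ h.2 ∧ prod l' h'

/-- The max constraint: keep only the tuples of maximal cost for each key. -/
def gammaMax {κ : Type*} (S : Set (κ × ℕ)) : Set (κ × ℕ) :=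
  {p | p ∈ S ∧ ∀ q ∈ S, q.1 = p.1 → p.2 ≥ q.2}

lemma exists_max_dom {κ : Type*} (I : Set (κ × ℕ)) (hI : I.Finite) :
    ∀ x ∈ I, ∃ y ∈ gammaMax I, y.1 = x.1 ∧ y.2 ≥ x.2 := by
  intro x hx
  obtain ⟨a, ha, hmax⟩ := Set.Finite.exists_maximalFor Prod.snd {p ∈ I | p.1 = x.1}
    (hI.subset (Set.sep_subset _ _)) ⟨x, hx, rfl⟩
  have hdom : ∀ q ∈ I, q.1 = x.1 → q.2 ≤ a.2 := by
    intro q hq hk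
    by_contra h
    push_neg at h
    exact absurd (@hmax q ⟨hq, hk⟩ (le_of_lt h)) (by omega)
  exact ⟨a, ⟨ha.1, fun q hq hk => hdom q hq (hk.trans ha.2)⟩, ha.2, hdom x hx rfl⟩

lemma inflate_list {κ : Type*} (I : Set (κ × ℕ)) (hI : I.Finite) :
    ∀ l : List (κ × ℕ), (∀ x ∈ l, x ∈ I) →
      ∃ l', (∀ x ∈ l', x ∈ gammaMax I) ∧ Inflates l' l := by
  intro l hl
  induction l with
  | nil => exact ⟨[], by simp, List.Forall₂.nil⟩
  | cons x l ih =>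
    obtain ⟨l', hl', hinf⟩ := ih (fun y hy => hl y (List.mem_cons_of_mem _ hy))
    obtain ⟨y, hy, hk, hc⟩ := exists_max_dom I hI x (hl x (List.mem_cons_self))
    refine ⟨y :: l', ?_, List.Forall₂.cons ⟨hk, hc⟩ hinf⟩
    intro z hz
    rcases List.mem_cons.mp hz with rfl | hz
    · exact hy
    · exact hl' z hz

theorem max_prem_of_inflation_preserving
    {κ : Type*} (prod : List (κ × ℕ) → (κ × ℕ) → Prop)
    (hip : InflationPreserving prod) :
    ∀ I : Set (κ × ℕ), I.Finite →
      gammaMax (ico prod I) = gammaMax (ico prod (gammaMax I)) := by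
  intro I hI
  have hsub : ico prod (gammaMax I) ⊆ ico prod I := by
    rintro h ⟨l, hl, hp⟩
    exact ⟨l, fun x hx => (hl x hx).1, hp⟩
  have hdom : ∀ h ∈ ico prod I, ∃ h' ∈ ico prod (gammaMax I),
      h'.1 = h.1 ∧ h'.2 ≥ h.2 := by
    rintro h ⟨l, hl, hp⟩
    obtain ⟨l', hl', hinf⟩ := inflate_list I hI l hl
    obtain ⟨h', hk, hc, hp'⟩ := hip l h l' hp hinf
    exact ⟨h', ⟨l', hl', hp'⟩, hk, hc⟩
  ext p
  constructor
  · rintro ⟨hpT, hpmax⟩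
    obtain ⟨q, hq, hk, hc⟩ := hdom p hpT
    have hle := hpmax q (hsub hq) hk
    have : q = p := Prod.ext hk (le_antisymm hle hc)
    subst this
    exact ⟨hq, fun r hr hk => hpmax r (hsub hr) hk⟩
  · rintro ⟨hpT, hpmax⟩
    refine ⟨hsub hpT, ?_⟩
    intro q hq hk
    obtain ⟨q', hq', hk', hc'⟩ := hdom q hq
    exact le_trans hc' (hpmax q' hq' (hk'.trans hk))
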